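/- Let R be a binary relation on subgroups of G refining inclusion, and let N ⊆ G be a normal subgroup such that N ⊆ K for every pair (K,H) ∈ R. Then for every nontrivial relation (K,H) in the generated transfer system ⟨R⟩, we have H ⊄ N (H is not contained in N). -/
import Mathlib


open Pointwise

/-- Conjugate of a subgroup: `conjS g H = g H g⁻¹`. -/
def conjS {G : Type} [Group G] (g : G) (H : Subgroup G) : Subgroup G :=
  MulAut.conj g • H

/-- A `G`-transfer system: a partial order on the subgroups of `G` refining
inclusion, closed under conjugation and restriction. -/
structure TransferSystem (G : Type) [Group G] where
  rel : Subgroup G → Subgroup G → Prop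
  le_of_rel : ∀ K H : Subgroup G, rel K H → K ≤ H
  refl : ∀ H : Subgroup G, rel H H
  antisymm : ∀ K H : Subgroup G, rel K H → rel H K → K = H
  trans : ∀ J K H : Subgroup G, rel J K → rel K H → rel J H
  conj : ∀ (K H : Subgroup G) (g : G), rel K H → rel (conjS g K) (conjS g H)
  res : ∀ K H L : Subgroup G, rel K H → L ≤ H → rel (K ⊓ L) L

/-- The transfer system generated by a relation `R`, described as a relation:
`genRel R K H` holds iff every transfer system containing `R` relates `K` to
`H`; i.e. it is the smallest transfer system containing `R`. -/
def genRel {G : Type} [Group G] (R : Subgroup G → Subgroup G → Prop)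
    (K H : Subgroup G) : Prop :=
  ∀ T : TransferSystem G, (∀ A B, R A B → T.rel A B) → T.rel K H


lemma conjS_inf {G : Type} [Group G] (g : G) (A B : Subgroup G) :
    conjS g (A ⊓ B) = conjS g A ⊓ conjS g B := Subgroup.smul_inf _ _ _

lemma conjS_mono {G : Type} [Group G] (g : G) {A B : Subgroup G} (h : A ≤ B) :
    conjS g A ≤ conjS g B := Subgroup.pointwise_smul_le_pointwise_smul_iff.2 h

lemma conjS_normal {G : Type} [Group G] (g : G) {N : Subgroup G} (hN : N.Normal) :
    conjS g N = N := by
  ext x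
  simp only [conjS, Subgroup.mem_pointwise_smul_iff_inv_smul_mem]
  constructor
  · intro h
    have := hN.conj_mem _ h g
    simpa [mul_assoc] using this
  · intro h
    have := hN.conj_mem _ h g⁻¹
    simpa [mul_assoc] using this

/-- Let `R` be a relation on subgroups of `G` refining
inclusion and `N ⊆ G` a normal subgroup such that `N ≤ K` for every pair
`(K, H) ∈ R`.  Then for every nontrivial relation `(K, H)` in the generated
transfer system `⟨R⟩`, the subgroup `H` is not contained in `N`. -/
theorem stmt8 {G : Type} [Group G] [Finite G]
    (R : Subgroup G → Subgroup G → Prop) (hR : ∀ K H, R K H → K ≤ H)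
    (N : Subgroup G) (hN : N.Normal) (hRN : ∀ K H, R K H → N ≤ K) :
    ∀ K H : Subgroup G, genRel R K H → K ≠ H → ¬ H ≤ N := by
  intro K H hgen hne hHN
  set T : TransferSystem G :=
    { rel := fun A B => A ≤ B ∧ N ⊓ B ≤ A
      le_of_rel := fun _ _ h => h.1
      refl := fun A => ⟨le_rfl, inf_le_right⟩
      antisymm := fun A B h1 h2 => le_antisymm h1.1 h2.1
      trans := fun J A B h1 h2 =>
        ⟨h1.1.trans h2.1, le_trans (le_inf inf_le_left h2.2) h1.2⟩
      conj := fun A B g h => by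
        refine ⟨conjS_mono g h.1, ?_⟩
        have : conjS g (N ⊓ B) ≤ conjS g A := conjS_mono g h.2
        rwa [conjS_inf, conjS_normal g hN] at this
      res := fun A B L h hL =>
        ⟨inf_le_right, le_inf (le_trans (le_inf inf_le_left (inf_le_right.trans hL)) h.2) inf_le_right⟩ }
  have hT := hgen T (fun A B hAB => ⟨hR A B hAB, inf_le_of_left_le (hRN A B hAB)⟩)
  exact hne (le_antisymm hT.1 (le_trans (le_inf hHN le_rfl) hT.2))
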